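/- arXiv:2407.04037 — 3 statements merged into one kernel-verified Lean document; each statement's English description precedes it below -/
import Mathlib

section
/- Let H be a graph with distinguished vertices c and d such that neither {c} nor {d} is a feedback vertex set of H. Then the edge-gadget reduction given by H (replacing each edge (u,v) of a graph G by a copy of H with u identified with c and v identified with d) is not a correct reduction from k-VertexCover to k-FeedbackVertexSet: in particular, the path with 2k+1 vertices has a vertex cover of size k, but its image under the edge-gadget map has no feedback vertex set of size at most k. -/
open SimpleGraph

/-- A vertex cover: a set of vertices meeting every edge. -/
def IsVertexCover {V : Type*} (G : SimpleGraph V) (U : Set V) : Prop :=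
  ∀ ⦃u v⦄, G.Adj u v → u ∈ U ∨ v ∈ U

/-- A feedback vertex set: a set of vertices whose removal leaves an acyclic graph. -/
def IsFVS {V : Type*} (G : SimpleGraph V) (U : Set V) : Prop :=
  (G.induce Uᶜ).IsAcyclic

/-- The vertex type of the edge-gadget image of `G`: the original vertices plus, for each
(oriented) edge of `G`, a fresh copy of the interior of the gadget graph `H`. -/
def EGVert {V W : Type*} [LinearOrder V] (G : SimpleGraph V) (c d : W) : Type _ :=
  V ⊕ ({p : V × V // G.Adj p.1 p.2 ∧ p.1 < p.2} × {w : W // w ≠ c ∧ w ≠ d})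

/-- Base adjacency relation for the edge-gadget construction: each edge `(u,v)` of `G`
(with `u < v`) is replaced by a fresh copy of `H`, identifying `u` with `c` and `v` with `d`. -/
def egBase {V W : Type*} [LinearOrder V] (G : SimpleGraph V) (H : SimpleGraph W) (c d : W)
    (x y : EGVert G c d) : Prop :=
  (∃ e : {p : V × V // G.Adj p.1 p.2 ∧ p.1 < p.2},
      x = Sum.inl e.1.1 ∧ y = Sum.inl e.1.2 ∧ H.Adj c d) ∨
  (∃ (e : {p : V × V // G.Adj p.1 p.2 ∧ p.1 < p.2}) (w : {w : W // w ≠ c ∧ w ≠ d}),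
      x = Sum.inl e.1.1 ∧ y = Sum.inr (e, w) ∧ H.Adj c w.1) ∨
  (∃ (e : {p : V × V // G.Adj p.1 p.2 ∧ p.1 < p.2}) (w : {w : W // w ≠ c ∧ w ≠ d}),
      x = Sum.inl e.1.2 ∧ y = Sum.inr (e, w) ∧ H.Adj d w.1) ∨
  (∃ (e : {p : V × V // G.Adj p.1 p.2 ∧ p.1 < p.2}) (w w' : {w : W // w ≠ c ∧ w ≠ d}),
      x = Sum.inr (e, w) ∧ y = Sum.inr (e, w') ∧ H.Adj w.1 w'.1)

/-- The edge-gadget image of `G`: every edge of `G` is replaced by a disjoint copy of `H`,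
identifying the endpoints with the distinguished vertices `c` and `d` of `H`. -/
def edgeGadget {V W : Type*} [LinearOrder V] (G : SimpleGraph V) (H : SimpleGraph W)
    (c d : W) : SimpleGraph (EGVert G c d) where
  Adj x y := egBase G H c d x y ∨ egBase G H c d y x
  symm := ⟨fun x y h => h.symm⟩
  loopless := by
    refine ⟨fun x h => ?_⟩
    have : egBase G H c d x x := by rcases h with h | h <;> exact h
    rcases this with ⟨e, h1, h2, _⟩ | ⟨e, w, h1, h2, _⟩ | ⟨e, w, h1, h2, _⟩
      | ⟨e, w, w', h1, h2, hadj⟩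
    · rw [h1] at h2
      exact absurd (Sum.inl_injective h2) (ne_of_lt e.2.2)
    · rw [h1] at h2; exact Sum.inl_ne_inr h2
    · rw [h1] at h2; exact Sum.inl_ne_inr h2
    · rw [h1] at h2
      obtain ⟨-, h⟩ := Prod.mk.injEq _ _ _ _ ▸ Sum.inr_injective h2
      exact H.loopless.irrefl _ (by rwa [h] at hadj)

lemma egKey {V W : Type*} [LinearOrder V] {G : SimpleGraph V} {H : SimpleGraph W} {c d : W}
    (hc : ¬ IsFVS H {c}) (hd : ¬ IsFVS H {d})
    {U : Set (EGVert G c d)} (hU : IsFVS (edgeGadget G H c d) U)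
    (e : {p : V × V // G.Adj p.1 p.2 ∧ p.1 < p.2})
    (hint : ∀ w : {w : W // w ≠ c ∧ w ≠ d}, Sum.inr (e, w) ∉ U) :
    Sum.inl e.1.1 ∈ U ∧ Sum.inl e.1.2 ∈ U := by
  classical
  constructor
  · by_contra hL
    obtain ⟨v0, p, hp⟩ : ∃ v0, ∃ p : (H.induce ({d} : Set W)ᶜ).Walk v0 v0, p.IsCycle := by
      by_contra hno; push_neg at hno; exact hd fun v p => hno v p
    let f : (({d} : Set W)ᶜ : Set W) → ((Uᶜ : Set (EGVert G c d))) := fun w =>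
      if h : (w : W) = c then ⟨Sum.inl e.1.1, hL⟩
      else ⟨Sum.inr (e, ⟨w, h, Set.mem_compl_singleton_iff.mp w.2⟩), hint _⟩
    have hhom : ∀ a b : (({d} : Set W)ᶜ : Set W), (H.induce ({d} : Set W)ᶜ).Adj a b →
        ((edgeGadget G H c d).induce Uᶜ).Adj (f a) (f b) := by
      intro a b hab
      have hab' : H.Adj a b := hab
      show (edgeGadget G H c d).Adj (f a : EGVert G c d) (f b)
      by_cases ha : (a : W) = c <;> by_cases hb : (b : W) = c
      · exact absurd hab' (by rw [ha, hb]; exact H.loopless.irrefl c)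
      · simp only [f, dif_pos ha, dif_neg hb]
        exact Or.inl (Or.inr (Or.inl ⟨e, _, rfl, rfl, by rwa [ha] at hab'⟩))
      · simp only [f, dif_neg ha, dif_pos hb]
        exact Or.inr (Or.inr (Or.inl ⟨e, _, rfl, rfl, by rw [hb] at hab'; exact hab'.symm⟩))
      · simp only [f, dif_neg ha, dif_neg hb]
        exact Or.inl (Or.inr (Or.inr (Or.inr ⟨e, _, _, rfl, rfl, hab'⟩)))
    have hinj : Function.Injective f := by
      intro a b hfab
      by_cases ha : (a : W) = c <;> by_cases hb : (b : W) = c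
      · exact Subtype.ext (ha.trans hb.symm)
      · exfalso; simp only [f, dif_pos ha, dif_neg hb, Subtype.mk.injEq] at hfab
        exact Sum.inl_ne_inr (congrArg Subtype.val hfab)
      · exfalso; simp only [f, dif_neg ha, dif_pos hb, Subtype.mk.injEq] at hfab
        exact Sum.inl_ne_inr (congrArg Subtype.val hfab).symm
      · simp only [f, dif_neg ha, dif_neg hb, Subtype.mk.injEq] at hfab
        have h2 := (Prod.ext_iff.mp (Sum.inr_injective (congrArg Subtype.val hfab))).2
        have h3 : (a : W) = (b : W) :=
          congrArg (Subtype.val : {w : W // w ≠ c ∧ w ≠ d} → W) h2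
        exact Subtype.ext h3
    exact hU (p.map ⟨f, @fun a b h => hhom a b h⟩) (hp.map hinj)
  · by_contra hL
    obtain ⟨v0, p, hp⟩ : ∃ v0, ∃ p : (H.induce ({c} : Set W)ᶜ).Walk v0 v0, p.IsCycle := by
      by_contra hno; push_neg at hno; exact hc fun v p => hno v p
    let f : (({c} : Set W)ᶜ : Set W) → ((Uᶜ : Set (EGVert G c d))) := fun w =>
      if h : (w : W) = d then ⟨Sum.inl e.1.2, hL⟩
      else ⟨Sum.inr (e, ⟨w, Set.mem_compl_singleton_iff.mp w.2, h⟩), hint _⟩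
    have hhom : ∀ a b : (({c} : Set W)ᶜ : Set W), (H.induce ({c} : Set W)ᶜ).Adj a b →
        ((edgeGadget G H c d).induce Uᶜ).Adj (f a) (f b) := by
      intro a b hab
      have hab' : H.Adj a b := hab
      show (edgeGadget G H c d).Adj (f a : EGVert G c d) (f b)
      by_cases ha : (a : W) = d <;> by_cases hb : (b : W) = d
      · exact absurd hab' (by rw [ha, hb]; exact H.loopless.irrefl d)
      · simp only [f, dif_pos ha, dif_neg hb]
        exact Or.inl (Or.inr (Or.inr (Or.inl ⟨e, _, rfl, rfl, by rwa [ha] at hab'⟩)))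
      · simp only [f, dif_neg ha, dif_pos hb]
        exact Or.inr (Or.inr (Or.inr (Or.inl ⟨e, _, rfl, rfl,
          by rw [hb] at hab'; exact hab'.symm⟩)))
      · simp only [f, dif_neg ha, dif_neg hb]
        exact Or.inl (Or.inr (Or.inr (Or.inr ⟨e, _, _, rfl, rfl, hab'⟩)))
    have hinj : Function.Injective f := by
      intro a b hfab
      by_cases ha : (a : W) = d <;> by_cases hb : (b : W) = d
      · exact Subtype.ext (ha.trans hb.symm)
      · exfalso; simp only [f, dif_pos ha, dif_neg hb, Subtype.mk.injEq] at hfab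
        exact Sum.inl_ne_inr (congrArg Subtype.val hfab)
      · exfalso; simp only [f, dif_neg ha, dif_pos hb, Subtype.mk.injEq] at hfab
        exact Sum.inl_ne_inr (congrArg Subtype.val hfab).symm
      · simp only [f, dif_neg ha, dif_neg hb, Subtype.mk.injEq] at hfab
        have h2 := (Prod.ext_iff.mp (Sum.inr_injective (congrArg Subtype.val hfab))).2
        have h3 : (a : W) = (b : W) :=
          congrArg (Subtype.val : {w : W // w ≠ c ∧ w ≠ d} → W) h2
        exact Subtype.ext h3
    exact hU (p.map ⟨f, @fun a b h => hhom a b h⟩) (hp.map hinj)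

theorem stmt_3 {W : Type*} (H : SimpleGraph W) (c d : W) (hcd : c ≠ d)
    (hc : ¬ IsFVS H {c}) (hd : ¬ IsFVS H {d}) (k : ℕ) (hk : 1 ≤ k) :
    (∃ U : Finset (Fin (2 * k + 1)), U.card = k ∧ _root_.IsVertexCover (pathGraph (2 * k + 1)) ↑U) ∧
    ¬ ∃ U : Finset (EGVert (pathGraph (2 * k + 1)) c d),
        U.card ≤ k ∧ IsFVS (edgeGadget (pathGraph (2 * k + 1)) H c d) ↑U := by
  classical
  constructor
  · refine ⟨Finset.univ.image fun i : Fin k => (⟨2 * i.1 + 1, by omega⟩ : Fin (2 * k + 1)),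
      ?_, ?_⟩
    · rw [Finset.card_image_of_injective _ ?_, Finset.card_univ, Fintype.card_fin]
      intro a b hab
      have : 2 * a.1 + 1 = 2 * b.1 + 1 := congrArg Fin.val hab
      exact Fin.ext (by omega)
    · intro u v hadj
      rw [pathGraph_adj] at hadj
      simp only [Finset.coe_image, Finset.coe_univ, Set.image_univ, Set.mem_range]
      have hu := u.isLt
      have hv := v.isLt
      rcases Nat.even_or_odd u.1 with ⟨j, hj⟩ | ⟨j, hj⟩
      · right
        obtain ⟨i, hik, hiv⟩ : ∃ i, i < k ∧ v.1 = 2 * i + 1 := by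
          rcases hadj with h | h
          · exact ⟨j, by omega, by omega⟩
          · exact ⟨j - 1, by omega, by omega⟩
        exact ⟨⟨i, hik⟩, Fin.ext (by simpa using hiv.symm)⟩
      · left
        exact ⟨⟨j, by omega⟩, Fin.ext (by simp; omega)⟩
  · rintro ⟨U, hcard, hfvs⟩
    have hchoice : ∀ i : Fin (2 * k), ∃ x ∈ U,
        (∃ (e : {p : Fin (2*k+1) × Fin (2*k+1) //
            (pathGraph (2*k+1)).Adj p.1 p.2 ∧ p.1 < p.2}) (w : {w : W // w ≠ c ∧ w ≠ d}),
          e.1.1.1 = i.1 ∧ x = Sum.inr (e, w)) ∨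
        x = Sum.inl (⟨i.1, by omega⟩ : Fin (2 * k + 1)) := by
      intro i
      have hi := i.isLt
      have hadj : (pathGraph (2*k+1)).Adj ⟨i.1, by omega⟩ ⟨i.1 + 1, by omega⟩ := by
        rw [pathGraph_adj]; left; rfl
      have hlt : (⟨i.1, by omega⟩ : Fin (2*k+1)) < ⟨i.1 + 1, by omega⟩ := by
        simp [Fin.lt_def]
      set e : {p : Fin (2*k+1) × Fin (2*k+1) //
          (pathGraph (2*k+1)).Adj p.1 p.2 ∧ p.1 < p.2} :=
        ⟨(⟨i.1, by omega⟩, ⟨i.1 + 1, by omega⟩), hadj, hlt⟩ with he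
      by_cases h : ∃ w : {w : W // w ≠ c ∧ w ≠ d}, Sum.inr (e, w) ∈ U
      · obtain ⟨w, hw⟩ := h
        exact ⟨_, hw, Or.inl ⟨e, w, rfl, rfl⟩⟩
      · push_neg at h
        have hboth := egKey hc hd hfvs e (fun w hw => h w (Finset.mem_coe.mp hw))
        exact ⟨Sum.inl ⟨i.1, by omega⟩, Finset.mem_coe.mp hboth.1, Or.inr rfl⟩
    choose F hFU hF using hchoice
    have hFinj : Function.Injective F := by
      intro i j hij
      rcases hF i with ⟨ei, wi, hei, hxi⟩ | hxi <;> rcases hF j with ⟨ej, wj, hej, hxj⟩ | hxj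
      · have heq := hxi.symm.trans (hij.trans hxj)
        have hee : ei = ej := congrArg Prod.fst (Sum.inr_injective heq)
        have : ei.1.1.1 = ej.1.1.1 := by rw [hee]
        exact Fin.ext (by omega)
      · exact absurd (hxi.symm.trans (hij.trans hxj)) (by simp)
      · exact absurd (hxj.symm.trans (hij.symm.trans hxi)) (by simp)
      · have heq := hxi.symm.trans (hij.trans hxj)
        have hF2 := Sum.inl_injective heq
        simp only [Fin.mk.injEq] at hF2
        exact Fin.ext hF2
    have h2k : 2 * k ≤ U.card := by
      have := Fintype.card_le_of_injective (fun i : Fin (2*k) => (⟨F i, hFU i⟩ : {x // x ∈ U}))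
        (fun a b hab => hFinj (congrArg Subtype.val hab))
      simpa using this
    omega
end

section
/- Let H be a graph with distinguished vertices c ≠ d such that {c} and {d} are feedback vertex sets of H and ∅ is not. For any graph G and any feedback vertex set U* of ρ_H(G) (the edge-gadget image of G), there exists a feedback vertex set U of ρ_H(G) with |U| ≤ |U*| such that U contains only original vertices of G (images of vertices of G), and such a U is a vertex cover of G. -/
open SimpleGraph

attribute [reducible] EGVert

section Gadget
variable {V W : Type*} [LinearOrder V] (G : SimpleGraph V) (H : SimpleGraph W) (c d : W)

open Classical in
/-- The canonical injection of the gadget copy at edge `e` into the edge-gadget graph. -/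
noncomputable def feMap (e : {p : V × V // G.Adj p.1 p.2 ∧ p.1 < p.2}) (w : W) : EGVert G c d :=
  if h : w = c then Sum.inl e.1.1 else if h' : w = d then Sum.inl e.1.2
  else Sum.inr (e, ⟨w, h, h'⟩)

lemma feMap_c (e) : feMap G c d e c = Sum.inl e.1.1 := by simp [feMap]

lemma feMap_d (hcd : c ≠ d) (e) : feMap G c d e d = Sum.inl e.1.2 := by
  simp [feMap, Ne.symm hcd]

lemma feMap_other (e) {w : W} (h1 : w ≠ c) (h2 : w ≠ d) :
    feMap G c d e w = Sum.inr (e, ⟨w, h1, h2⟩) := by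
  simp [feMap, h1, h2]

lemma feMap_cases (hcd : c ≠ d) (e) (w : W) :
    (w = c ∧ feMap G c d e w = Sum.inl e.1.1) ∨
    (w = d ∧ feMap G c d e w = Sum.inl e.1.2) ∨
    (∃ (h1 : w ≠ c) (h2 : w ≠ d), feMap G c d e w = Sum.inr (e, ⟨w, h1, h2⟩)) := by
  by_cases h1 : w = c
  · exact Or.inl ⟨h1, by rw [h1, feMap_c]⟩
  · by_cases h2 : w = d
    · exact Or.inr (Or.inl ⟨h2, by rw [h2, feMap_d G c d hcd]⟩)
    · exact Or.inr (Or.inr ⟨h1, h2, feMap_other G c d e h1 h2⟩)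

lemma feMap_hom (hcd : c ≠ d) (e) {a b : W} (hab : H.Adj a b) :
    (edgeGadget G H c d).Adj (feMap G c d e a) (feMap G c d e b) := by
  have hne := hab.ne
  rcases feMap_cases G c d hcd e a with ⟨ha, hfa⟩ | ⟨ha, hfa⟩ | ⟨ha1, ha2, hfa⟩ <;>
    rcases feMap_cases G c d hcd e b with ⟨hb, hfb⟩ | ⟨hb, hfb⟩ | ⟨hb1, hb2, hfb⟩ <;>
    rw [hfa, hfb] <;> show egBase G H c d _ _ ∨ egBase G H c d _ _ <;> unfold egBase
  · exact absurd (ha.trans hb.symm) hne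
  · exact Or.inl (Or.inl ⟨e, rfl, rfl, ha ▸ hb ▸ hab⟩)
  · exact Or.inl (Or.inr (Or.inl ⟨e, ⟨b, hb1, hb2⟩, rfl, rfl, ha ▸ hab⟩))
  · exact Or.inr (Or.inl ⟨e, rfl, rfl, (ha ▸ hb ▸ hab).symm⟩)
  · exact absurd (ha.trans hb.symm) hne
  · exact Or.inl (Or.inr (Or.inr (Or.inl ⟨e, ⟨b, hb1, hb2⟩, rfl, rfl, ha ▸ hab⟩)))
  · exact Or.inr (Or.inr (Or.inl ⟨e, ⟨a, ha1, ha2⟩, rfl, rfl, (hb ▸ hab).symm⟩))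
  · exact Or.inr (Or.inr (Or.inr (Or.inl ⟨e, ⟨a, ha1, ha2⟩, rfl, rfl, (hb ▸ hab).symm⟩)))
  · exact Or.inl (Or.inr (Or.inr (Or.inr ⟨e, ⟨a, ha1, ha2⟩, ⟨b, hb1, hb2⟩, rfl, rfl, hab⟩)))

lemma feMap_inj (hcd : c ≠ d) (e) : Function.Injective (feMap G c d e) := by
  have hne : e.1.1 ≠ e.1.2 := ne_of_lt e.2.2
  intro a b h
  rcases feMap_cases G c d hcd e a with ⟨ha, hfa⟩ | ⟨ha, hfa⟩ | ⟨ha1, ha2, hfa⟩ <;>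
    rcases feMap_cases G c d hcd e b with ⟨hb, hfb⟩ | ⟨hb, hfb⟩ | ⟨hb1, hb2, hfb⟩ <;>
    rw [hfa, hfb] at h
  · exact ha.trans hb.symm
  · exact absurd (Sum.inl_injective h) hne
  · exact absurd h Sum.inl_ne_inr
  · exact absurd (Sum.inl_injective h).symm hne
  · exact ha.trans hb.symm
  · exact absurd h Sum.inl_ne_inr
  · exact absurd h Sum.inr_ne_inl
  · exact absurd h Sum.inr_ne_inl
  · injection h with h
    injection h with hE hW
    injection hW with hW
    try exact hW

lemma adj_inr_inr {e e' w w'}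
    (h : (edgeGadget G H c d).Adj (Sum.inr (e, w)) (Sum.inr (e', w'))) :
    e = e' ∧ H.Adj w.1 w'.1 := by
  change egBase G H c d _ _ ∨ egBase G H c d _ _ at h
  rcases h with h | h
  · rcases h with ⟨e0,h1,h2,h3⟩|⟨e0,w0,h1,h2,h3⟩|⟨e0,w0,h1,h2,h3⟩|⟨e0,w0,w0',h1,h2,h3⟩
    · first | exact absurd h1 Sum.inr_ne_inl | exact absurd h1 Sum.inl_ne_inr
    · first | exact absurd h1 Sum.inr_ne_inl | exact absurd h1 Sum.inl_ne_inr
    · first | exact absurd h1 Sum.inr_ne_inl | exact absurd h1 Sum.inl_ne_inr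
    · injection h1 with h1
      injection h2 with h2
      injection h1 with hE hW
      injection h2 with hE' hW'
      subst hE; subst hW; subst hE'; subst hW'
      exact ⟨rfl, h3⟩
  · rcases h with ⟨e0,h1,h2,h3⟩|⟨e0,w0,h1,h2,h3⟩|⟨e0,w0,h1,h2,h3⟩|⟨e0,w0,w0',h1,h2,h3⟩
    · first | exact absurd h1 Sum.inr_ne_inl | exact absurd h1 Sum.inl_ne_inr
    · first | exact absurd h1 Sum.inr_ne_inl | exact absurd h1 Sum.inl_ne_inr
    · first | exact absurd h1 Sum.inr_ne_inl | exact absurd h1 Sum.inl_ne_inr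
    · injection h1 with h1
      injection h2 with h2
      injection h1 with hE hW
      injection h2 with hE' hW'
      subst hE; subst hW; subst hE'; subst hW'
      exact ⟨rfl, h3.symm⟩

lemma adj_inl_inr {u e w}
    (h : (edgeGadget G H c d).Adj (Sum.inl u) (Sum.inr (e, w))) :
    (u = e.1.1 ∧ H.Adj c w.1) ∨ (u = e.1.2 ∧ H.Adj d w.1) := by
  change egBase G H c d _ _ ∨ egBase G H c d _ _ at h
  rcases h with h | h
  · rcases h with ⟨e0,h1,h2,h3⟩|⟨e0,w0,h1,h2,h3⟩|⟨e0,w0,h1,h2,h3⟩|⟨e0,w0,w0',h1,h2,h3⟩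
    · first | exact absurd h2 Sum.inr_ne_inl | exact absurd h2 Sum.inl_ne_inr
    · injection h1 with h1
      injection h2 with h2
      injection h2 with hE hW
      subst hE; subst hW
      exact Or.inl ⟨h1, h3⟩
    · injection h1 with h1
      injection h2 with h2
      injection h2 with hE hW
      subst hE; subst hW
      exact Or.inr ⟨h1, h3⟩
    · first | exact absurd h1 Sum.inr_ne_inl | exact absurd h1 Sum.inl_ne_inr
  · rcases h with ⟨e0,h1,h2,h3⟩|⟨e0,w0,h1,h2,h3⟩|⟨e0,w0,h1,h2,h3⟩|⟨e0,w0,w0',h1,h2,h3⟩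
    · first | exact absurd h1 Sum.inr_ne_inl | exact absurd h1 Sum.inl_ne_inr
    · first | exact absurd h1 Sum.inr_ne_inl | exact absurd h1 Sum.inl_ne_inr
    · first | exact absurd h1 Sum.inr_ne_inl | exact absurd h1 Sum.inl_ne_inr
    · first | exact absurd h2 Sum.inr_ne_inl | exact absurd h2 Sum.inl_ne_inr

lemma adj_inl_inl {u u'}
    (h : (edgeGadget G H c d).Adj (Sum.inl u) (Sum.inl u')) :
    ∃ e : {p : V × V // G.Adj p.1 p.2 ∧ p.1 < p.2},
      (u = e.1.1 ∧ u' = e.1.2) ∨ (u = e.1.2 ∧ u' = e.1.1) := by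
  change egBase G H c d _ _ ∨ egBase G H c d _ _ at h
  rcases h with h | h
  · rcases h with ⟨e0,h1,h2,h3⟩|⟨e0,w0,h1,h2,h3⟩|⟨e0,w0,h1,h2,h3⟩|⟨e0,w0,w0',h1,h2,h3⟩
    · injection h1 with h1
      injection h2 with h2
      exact ⟨e0, Or.inl ⟨h1, h2⟩⟩
    · first | exact absurd h2 Sum.inr_ne_inl | exact absurd h2 Sum.inl_ne_inr
    · first | exact absurd h2 Sum.inr_ne_inl | exact absurd h2 Sum.inl_ne_inr
    · first | exact absurd h1 Sum.inr_ne_inl | exact absurd h1 Sum.inl_ne_inr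
  · rcases h with ⟨e0,h1,h2,h3⟩|⟨e0,w0,h1,h2,h3⟩|⟨e0,w0,h1,h2,h3⟩|⟨e0,w0,w0',h1,h2,h3⟩
    · injection h1 with h1
      injection h2 with h2
      exact ⟨e0, Or.inr ⟨h2, h1⟩⟩
    · first | exact absurd h2 Sum.inr_ne_inl | exact absurd h2 Sum.inl_ne_inr
    · first | exact absurd h2 Sum.inr_ne_inl | exact absurd h2 Sum.inl_ne_inr
    · first | exact absurd h1 Sum.inr_ne_inl | exact absurd h1 Sum.inl_ne_inr

end Gadget

section Generic
variable {α β : Type*}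

def liftWalk {X : SimpleGraph α} {s : Set α} :
    ∀ {a b : α} (p : X.Walk a b), (∀ x ∈ p.support, x ∈ s) → ∀ (ha : a ∈ s) (hb : b ∈ s),
      (X.induce s).Walk ⟨a, ha⟩ ⟨b, hb⟩
  | _, _, Walk.nil, _, _, _ => Walk.nil
  | _, _, Walk.cons h p, hs, ha, hb =>
      have h2 : _ ∈ s := hs _ (by simp [Walk.support_cons])
      Walk.cons (by exact h) (liftWalk p (fun x hx => hs x (by simp [Walk.support_cons, hx])) h2 hb)

lemma liftWalk_map {X : SimpleGraph α} {s : Set α} :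
    ∀ {a b : α} (p : X.Walk a b) (hs : ∀ x ∈ p.support, x ∈ s) (ha : a ∈ s) (hb : b ∈ s),
      (liftWalk p hs ha hb).map (Embedding.induce s).toHom = p
  | _, _, Walk.nil, _, _, _ => rfl
  | _, _, Walk.cons h p, hs, ha, hb => by
      simp only [liftWalk, Walk.map_cons]
      exact congrArg (Walk.cons h) (liftWalk_map p _ _ _)

lemma acyclic_induce_iff (X : SimpleGraph α) (s : Set α) :
    (X.induce s).IsAcyclic ↔
      ∀ (v : α) (p : X.Walk v v), p.IsCycle → ¬ (∀ x ∈ p.support, x ∈ s) := by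
  constructor
  · intro hA v p hp hsup
    have ha := hsup v p.start_mem_support
    have hcyc : (liftWalk p hsup ha ha).IsCycle := by
      rw [← Walk.map_isCycle_iff_of_injective (p := liftWalk p hsup ha ha)
        (f := (Embedding.induce s).toHom) (by exact Subtype.val_injective), liftWalk_map]
      exact hp
    exact hA _ hcyc
  · intro h v q hq
    have hmc : (q.map (Embedding.induce (G := X) s).toHom).IsCycle :=
      hq.map (f := (Embedding.induce (G := X) s).toHom) (by exact Subtype.val_injective)
    refine h _ _ hmc ?_
    intro x hx
    rw [Walk.support_map, List.mem_map] at hx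
    obtain ⟨y, -, rfl⟩ := hx
    exact y.2

lemma cycleTransfer {X : SimpleGraph α} {Y : SimpleGraph β} {s : Set α} (f : α → β)
    (hinj : Set.InjOn f s)
    (hadj : ∀ a ∈ s, ∀ b ∈ s, X.Adj a b → Y.Adj (f a) (f b))
    {v : α} (p : X.Walk v v) (hp : p.IsCycle) (hs : ∀ x ∈ p.support, x ∈ s) :
    ∃ (u : β) (q : Y.Walk u u), q.IsCycle ∧ ∀ y ∈ q.support, ∃ x ∈ s, f x = y := by
  have ha := hs v p.start_mem_support
  let ψ : X.induce s →g Y :=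
    ⟨fun a => f a.1, fun {a b} hab => hadj a.1 a.2 b.1 b.2 hab⟩
  have hψ : Function.Injective ψ := by
    intro a b hab
    exact Subtype.ext (hinj a.2 b.2 hab)
  have hcyc : (liftWalk p hs ha ha).IsCycle := by
    rw [← Walk.map_isCycle_iff_of_injective (p := liftWalk p hs ha ha)
      (f := (Embedding.induce s).toHom) (by exact Subtype.val_injective), liftWalk_map]
    exact hp
  refine ⟨f v, (liftWalk p hs ha ha).map ψ, hcyc.map hψ, ?_⟩
  intro y hy
  rw [Walk.support_map, List.mem_map] at hy
  obtain ⟨x, -, rfl⟩ := hy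
  exact ⟨x.1, x.2, rfl⟩

end Generic

section Main
variable {V W : Type*} [LinearOrder V] (G : SimpleGraph V) (H : SimpleGraph W) (c d : W)

lemma confine (U : Set (EGVert G c d)) (e : {p : V × V // G.Adj p.1 p.2 ∧ p.1 < p.2})
    (hcov : Sum.inl e.1.1 ∈ U ∨ Sum.inl e.1.2 ∈ U)
    :
    ∀ {x a : EGVert G c d} (r : (edgeGadget G H c d).Walk x a),
      (a = Sum.inl e.1.1 ∨ a = Sum.inl e.1.2) → r.support.Nodup →
      (∀ z ∈ r.support, z ∉ U) → (∃ w, x = Sum.inr (e, w)) →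
      ∀ z ∈ r.support, (∃ w, z = Sum.inr (e, w)) ∨ z = a := by
  intro x a r
  induction r with
  | nil =>
    intro _ _ _ _ z hz
    rw [Walk.support_nil, List.mem_singleton] at hz
    exact Or.inr hz
  | @cons x' y' a hadj r ih =>
    intro ha hnd hU hx z hz
    obtain ⟨w₀, rfl⟩ := hx
    simp only [Walk.support_cons, List.mem_cons] at hz
    simp only [Walk.support_cons, List.nodup_cons] at hnd
    -- classify y'
    have hy' : (∃ w, y' = Sum.inr (e, w)) ∨ (y' = a ∧ r.support = [a]) := by
      match y', r with
      | Sum.inl u2, r =>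
        have hclass := adj_inl_inr G H c d hadj.symm
        have hy2 : (Sum.inl u2 : EGVert G c d) = Sum.inl e.1.1 ∨ (Sum.inl u2 : EGVert G c d) = Sum.inl e.1.2 := by
          rcases hclass with ⟨h1, -⟩ | ⟨h1, -⟩
          · exact Or.inl (by rw [h1])
          · exact Or.inr (by rw [h1])
        by_cases hya : (Sum.inl u2 : EGVert G c d) = a
        · refine Or.inr ⟨hya, ?_⟩
          subst hya
          match r with
          | Walk.nil => rw [Walk.support_nil]
          | Walk.cons h' r' =>
            exfalso
            have hend := r'.end_mem_support
            rw [Walk.support_cons, List.nodup_cons] at hnd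
            exact hnd.2.1 hend
        · exfalso
          have hyU : (Sum.inl u2 : EGVert G c d) ∉ U :=
            hU _ (by rw [Walk.support_cons]; exact List.mem_cons_of_mem _ r.start_mem_support)
          have haU : a ∉ U :=
            hU _ (by rw [Walk.support_cons]; exact List.mem_cons_of_mem _ r.end_mem_support)
          rcases hy2 with hy2 | hy2 <;> rcases ha with rfl | rfl
          · exact hya hy2
          · rcases hcov with h | h
            · exact hyU (hy2 ▸ h)
            · exact haU h
          · rcases hcov with h | h
            · exact haU h
            · exact hyU (hy2 ▸ h)
          · exact hya hy2
      | Sum.inr (e2, w2), r =>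
        obtain ⟨rfl, -⟩ := adj_inr_inr G H c d hadj
        exact Or.inl ⟨w2, rfl⟩
    rcases hz with rfl | hz
    · exact Or.inl ⟨w₀, rfl⟩
    · rcases hy' with ⟨w2, rfl⟩ | ⟨-, hr⟩
      · exact ih ha hnd.2
          (fun z hz => hU z (by rw [Walk.support_cons]; exact List.mem_cons_of_mem _ hz))
          ⟨w2, rfl⟩ z hz
      · rw [hr, List.mem_singleton] at hz
        exact Or.inr hz

lemma confineInt (e : {p : V × V // G.Adj p.1 p.2 ∧ p.1 < p.2}) :
    ∀ {x y} (r : (edgeGadget G H c d).Walk x y),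
      (∀ z ∈ r.support, ∃ e' w', z = Sum.inr (e', w')) → (∃ w, x = Sum.inr (e, w)) →
      ∀ z ∈ r.support, ∃ w, z = Sum.inr (e, w) := by
  intro x y r
  induction r with
  | nil =>
    intro _ hx z hz
    rw [Walk.support_nil, List.mem_singleton] at hz
    exact hz ▸ hx
  | @cons x' y' _ hadj r ih =>
    intro hall hx z hz
    obtain ⟨w₀, rfl⟩ := hx
    simp only [Walk.support_cons, List.mem_cons] at hz
    rcases hz with rfl | hz
    · exact ⟨w₀, rfl⟩
    · obtain ⟨e2, w2, rfl⟩ : ∃ e' w', y' = Sum.inr (e', w') :=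
        hall _ (by rw [Walk.support_cons]; exact List.mem_cons_of_mem _ r.start_mem_support)
      obtain ⟨rfl, -⟩ := adj_inr_inr G H c d hadj
      exact ih (fun z hz => hall z (by rw [Walk.support_cons]; exact List.mem_cons_of_mem _ hz))
        ⟨w2, rfl⟩ z hz

end Main

section Final
variable {V W : Type*} [LinearOrder V] (G : SimpleGraph V) (H : SimpleGraph W) (c d : W)

/-- The map collapsing gadget-interior vertices to (one endpoint of) their gadget. -/
def collapse : EGVert G c d → EGVert G c d
  | Sum.inl v => Sum.inl v
  | Sum.inr (e, _) => Sum.inl e.1.1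

lemma cycle_case_inl (hcd : c ≠ d)
    (hc : ∀ (v : W) (p : H.Walk v v), p.IsCycle → ¬∀ x ∈ p.support, x ∈ ({c}ᶜ : Set W))
    (hd : ∀ (v : W) (p : H.Walk v v), p.IsCycle → ¬∀ x ∈ p.support, x ∈ ({d}ᶜ : Set W))
    (U : Set (EGVert G c d))
    (hcovU : ∀ e : {p : V × V // G.Adj p.1 p.2 ∧ p.1 < p.2},
      Sum.inl e.1.1 ∈ U ∨ Sum.inl e.1.2 ∈ U)
    {u : V} (p : (edgeGadget G H c d).Walk (Sum.inl u) (Sum.inl u))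
    (hp : p.IsCycle) (hsup : ∀ x ∈ p.support, x ∉ U) : False := by
  cases p with
  | nil => exact hp.ne_nil rfl
  | @cons _ b _ hadj q =>
    have hnd : q.support.Nodup := by
      have := hp.support_nodup
      rwa [Walk.support_cons, List.tail_cons] at this
    have hsupq : ∀ z ∈ q.support, z ∉ U := fun z hz =>
      hsup z (by rw [Walk.support_cons]; exact List.mem_cons_of_mem _ hz)
    match b, hadj, q, hnd, hsupq with
    | Sum.inl u2, hadj, q, hnd, hsupq =>
      obtain ⟨e, he⟩ := adj_inl_inl G H c d hadj
      have h1 : (Sum.inl u : EGVert G c d) ∉ U := hsup _ (Walk.start_mem_support _)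
      have h2 : (Sum.inl u2 : EGVert G c d) ∉ U :=
        hsupq _ (Walk.start_mem_support _)
      rcases he with ⟨hu, hu2⟩ | ⟨hu, hu2⟩ <;> rcases hcovU e with h | h
      · exact h1 (by rw [hu]; exact h)
      · exact h2 (by rw [hu2]; exact h)
      · exact h2 (by rw [hu2]; exact h)
      · exact h1 (by rw [hu]; exact h)
    | Sum.inr (e, w₀), hadj, q, hnd, hsupq =>
      have hue := adj_inl_inr G H c d hadj
      have hene : e.1.1 ≠ e.1.2 := ne_of_lt e.2.2
      have ha : (Sum.inl u : EGVert G c d) = Sum.inl e.1.1 ∨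
          (Sum.inl u : EGVert G c d) = Sum.inl e.1.2 := by
        rcases hue with ⟨h, -⟩ | ⟨h, -⟩
        · exact Or.inl (by rw [h])
        · exact Or.inr (by rw [h])
      have hconf := confine G H c d U e (hcovU e) q ha hnd hsupq ⟨w₀, rfl⟩
      -- the full support of the cycle:
      have hps : ∀ z ∈ (Walk.cons hadj q).support,
          (∃ w, z = Sum.inr (e, w)) ∨ z = Sum.inl u := by
        intro z hz
        rw [Walk.support_cons, List.mem_cons] at hz
        rcases hz with rfl | hz
        · exact Or.inr rfl
        · exact hconf z hz
      rcases hue with ⟨hu, -⟩ | ⟨hu, -⟩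
      · -- u = e.1.1 plays the role of c; contradict hd
        obtain ⟨u', q', hq', hsupp'⟩ := cycleTransfer
          (X := edgeGadget G H c d) (Y := H)
          (s := {z | (∃ w, z = Sum.inr (e, w)) ∨ z = Sum.inl u})
          (fun z => match z with | Sum.inl _ => c | Sum.inr (_, w) => w.1)
          (by
            rintro z (⟨w1, rfl⟩ | rfl) z' (⟨w2, rfl⟩ | rfl) hgz
            · simp only at hgz
              exact congrArg (fun t => Sum.inr (e, t) : {w : W // w ≠ c ∧ w ≠ d} → _)
                (Subtype.ext hgz)
            · simp only at hgz
              exact absurd hgz w1.2.1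
            · simp only at hgz
              exact absurd hgz.symm w2.2.1
            · rfl)
          (by
            rintro z (⟨w1, rfl⟩ | rfl) z' (⟨w2, rfl⟩ | rfl) hadj2
            · exact (adj_inr_inr G H c d hadj2).2
            · rcases adj_inl_inr G H c d hadj2.symm with ⟨-, h⟩ | ⟨h, -⟩
              · exact h.symm
              · exact absurd (hu.symm.trans h) hene
            · rcases adj_inl_inr G H c d hadj2 with ⟨-, h⟩ | ⟨h, -⟩
              · exact h
              · exact absurd (hu.symm.trans h) hene
            · exact absurd rfl hadj2.ne)
          (Walk.cons hadj q) hp hps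
        refine hd u' q' hq' ?_
        intro x hx
        obtain ⟨z, hz, rfl⟩ := hsupp' x hx
        rcases hz with ⟨w1, rfl⟩ | rfl
        · exact w1.2.2
        · exact hcd
      · -- u = e.1.2 plays the role of d; contradict hc
        obtain ⟨u', q', hq', hsupp'⟩ := cycleTransfer
          (X := edgeGadget G H c d) (Y := H)
          (s := {z | (∃ w, z = Sum.inr (e, w)) ∨ z = Sum.inl u})
          (fun z => match z with | Sum.inl _ => d | Sum.inr (_, w) => w.1)
          (by
            rintro z (⟨w1, rfl⟩ | rfl) z' (⟨w2, rfl⟩ | rfl) hgz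
            · simp only at hgz
              exact congrArg (fun t => Sum.inr (e, t) : {w : W // w ≠ c ∧ w ≠ d} → _)
                (Subtype.ext hgz)
            · simp only at hgz
              exact absurd hgz w1.2.2
            · simp only at hgz
              exact absurd hgz.symm w2.2.2
            · rfl)
          (by
            rintro z (⟨w1, rfl⟩ | rfl) z' (⟨w2, rfl⟩ | rfl) hadj2
            · exact (adj_inr_inr G H c d hadj2).2
            · rcases adj_inl_inr G H c d hadj2.symm with ⟨h, -⟩ | ⟨-, h⟩
              · exact absurd (hu.symm.trans h).symm hene
              · exact h.symm
            · rcases adj_inl_inr G H c d hadj2 with ⟨h, -⟩ | ⟨-, h⟩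
              · exact absurd (hu.symm.trans h).symm hene
              · exact h
            · exact absurd rfl hadj2.ne)
          (Walk.cons hadj q) hp hps
        refine hc u' q' hq' ?_
        intro x hx
        obtain ⟨z, hz, rfl⟩ := hsupp' x hx
        rcases hz with ⟨w1, rfl⟩ | rfl
        · exact w1.2.1
        · exact Ne.symm hcd

lemma noCycleU (hcd : c ≠ d) (hc : IsFVS H {c}) (hd : IsFVS H {d})
    (U : Set (EGVert G c d))
    (hcovU : ∀ e : {p : V × V // G.Adj p.1 p.2 ∧ p.1 < p.2},
      Sum.inl e.1.1 ∈ U ∨ Sum.inl e.1.2 ∈ U) :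
    IsFVS (edgeGadget G H c d) U := by
  classical
  have hc' := (acyclic_induce_iff H {c}ᶜ).mp hc
  have hd' := (acyclic_induce_iff H {d}ᶜ).mp hd
  rw [IsFVS, acyclic_induce_iff]
  intro v p hp hsup
  have hsup' : ∀ x ∈ p.support, x ∉ U := hsup
  by_cases hil : ∃ (u : V), (Sum.inl u : EGVert G c d) ∈ p.support
  · obtain ⟨u, hu⟩ := hil
    have hp' := hp.rotate hu
    have hsupr : ∀ x ∈ (p.rotate _ hu).support, x ∉ U := by
      intro x hx
      rw [Walk.support_eq_cons, List.mem_cons] at hx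
      rcases hx with rfl | hx
      · exact hsup' _ hu
      · have := (Walk.support_rotate p _ hu).mem_iff.mp hx
        exact hsup' _ (List.mem_of_mem_tail this)
    exact cycle_case_inl G H c d hcd hc' hd' U hcovU (p.rotate _ hu) hp' hsupr
  · push_neg at hil
    have hall : ∀ z ∈ p.support, ∃ e' w', z = Sum.inr (e', w') := by
      intro z hz
      match z with
      | Sum.inl u => exact absurd hz (hil u)
      | Sum.inr (e', w') => exact ⟨e', w', rfl⟩
    obtain ⟨e, w₀, hv⟩ := hall v p.start_mem_support
    subst hv
    have hconf := confineInt G H c d e p hall ⟨w₀, rfl⟩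
    obtain ⟨u', q', hq', hsupp'⟩ := cycleTransfer
      (X := edgeGadget G H c d) (Y := H)
      (s := {z | ∃ w, z = Sum.inr (e, w)})
      (fun z => match z with | Sum.inl _ => c | Sum.inr (_, w) => w.1)
      (by
        rintro z ⟨w1, rfl⟩ z' ⟨w2, rfl⟩ hgz
        simp only at hgz
        exact congrArg (fun t => Sum.inr (e, t) : {w : W // w ≠ c ∧ w ≠ d} → _)
          (Subtype.ext hgz))
      (by
        rintro z ⟨w1, rfl⟩ z' ⟨w2, rfl⟩ hadj2
        exact (adj_inr_inr G H c d hadj2).2)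
      p hp hconf
    refine hc' u' q' hq' ?_
    intro x hx
    obtain ⟨z, ⟨w1, rfl⟩, rfl⟩ := hsupp' x hx
    exact w1.2.1

end Final

theorem stmt_17 {V W : Type*} [LinearOrder V] (G : SimpleGraph V) (H : SimpleGraph W)
    (c d : W) (hcd : c ≠ d)
    (hc : IsFVS H {c}) (hd : IsFVS H {d}) (hH : ¬ IsFVS H (∅ : Set W))
    (Ustar : Finset (EGVert G c d)) (hUstar : IsFVS (edgeGadget G H c d) ↑Ustar) :
    ∃ U : Finset (EGVert G c d),
      U.card ≤ Ustar.card ∧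
      IsFVS (edgeGadget G H c d) ↑U ∧
      (∀ x ∈ U, ∃ v : V, x = Sum.inl v) ∧
      _root_.IsVertexCover G {v : V | Sum.inl v ∈ U} := by
  classical
  -- a cycle in H
  obtain ⟨v0, p0, hp0⟩ : ∃ (v : W) (p : H.Walk v v), p.IsCycle := by
    by_contra hno
    push_neg at hno
    exact hH ((acyclic_induce_iff H (∅ : Set W)ᶜ).mpr (fun v p hp _ => hno v p hp))
  have hUstar' := (acyclic_induce_iff _ _).mp hUstar
  -- Ustar meets every closed gadget copy
  have hcovStar : ∀ e : {p : V × V // G.Adj p.1 p.2 ∧ p.1 < p.2},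
      Sum.inl e.1.1 ∈ Ustar ∨ Sum.inl e.1.2 ∈ Ustar ∨
        ∃ w, Sum.inr (e, w) ∈ Ustar := by
    intro e
    by_contra hcon
    push_neg at hcon
    obtain ⟨h1, h2, h3⟩ := hcon
    let φ : H →g edgeGadget G H c d :=
      ⟨feMap G c d e, fun hab => feMap_hom G H c d hcd e hab⟩
    have hcyc : (p0.map φ).IsCycle := hp0.map (feMap_inj G c d hcd e)
    refine hUstar' _ _ hcyc ?_
    intro x hx
    rw [Walk.support_map, List.mem_map] at hx
    obtain ⟨w, -, rfl⟩ := hx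
    show φ w ∉ (Ustar : Set (EGVert G c d))
    rcases feMap_cases G c d hcd e w with ⟨-, hf⟩ | ⟨-, hf⟩ | ⟨hw1, hw2, hf⟩ <;>
      show feMap G c d e w ∉ (Ustar : Set (EGVert G c d)) <;> rw [hf] <;>
      simp only [Finset.coe_insert, Set.mem_setOf_eq, Finset.mem_coe]
    · exact h1
    · exact h2
    · exact h3 _
  -- the collapsed set
  refine ⟨Ustar.image (collapse G c d), Finset.card_image_le, ?_, ?_, ?_⟩
  · -- FVS
    apply noCycleU G H c d hcd hc hd
    intro e
    rcases hcovStar e with h | h | ⟨w, h⟩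
    · exact Or.inl (by
        simp only [Finset.coe_image, Set.mem_image, Finset.mem_coe]
        exact ⟨_, h, rfl⟩)
    · exact Or.inr (by
        simp only [Finset.coe_image, Set.mem_image, Finset.mem_coe]
        exact ⟨_, h, rfl⟩)
    · exact Or.inl (by
        simp only [Finset.coe_image, Set.mem_image, Finset.mem_coe]
        exact ⟨_, h, rfl⟩)
  · -- only original vertices
    intro x hx
    rw [Finset.mem_image] at hx
    obtain ⟨y, -, rfl⟩ := hx
    match y with
    | Sum.inl v => exact ⟨v, rfl⟩
    | Sum.inr (e, w) => exact ⟨e.1.1, rfl⟩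
  · -- vertex cover
    intro u v huv
    rcases lt_trichotomy u v with hlt | heq | hlt
    · rcases hcovStar ⟨(u, v), huv, hlt⟩ with h | h | ⟨w, h⟩
      · exact Or.inl (Finset.mem_image.mpr ⟨_, h, rfl⟩)
      · exact Or.inr (Finset.mem_image.mpr ⟨_, h, rfl⟩)
      · exact Or.inl (Finset.mem_image.mpr ⟨_, h, rfl⟩)
    · exact absurd heq huv.ne
    · rcases hcovStar ⟨(v, u), huv.symm, hlt⟩ with h | h | ⟨w, h⟩
      · exact Or.inr (Finset.mem_image.mpr ⟨_, h, rfl⟩)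
      · exact Or.inl (Finset.mem_image.mpr ⟨_, h, rfl⟩)
      · exact Or.inr (Finset.mem_image.mpr ⟨_, h, rfl⟩)
end

section
/- For every directed graph G, the generalized-sum/gadget composition identity holds for the standard directed-to-undirected Hamiltonian cycle reduction: if C* is an undirected Hamiltonian cycle of the image graph G* (vertices v_in, v_mid, v_out per vertex v; path edges {v_in,v_mid},{v_mid,v_out}; cross-edges {u_out, v_in} per directed edge (u,v)), then for every vertex v, C* uses both edges {v_in, v_mid} and {v_mid, v_out}, and hence C* traverses each vertex-gadget as the path v_in, v_mid, v_out or its reverse, and the cyclic sequence of gadgets traversed by C* yields a directed Hamiltonian cycle of G. -/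
open SimpleGraph

/-- A directed Hamiltonian cycle of the directed graph `R`: a cyclic enumeration of all
vertices following the edge directions. -/
def DirHamiltonian {V : Type*} [Fintype V] (R : V → V → Prop) : Prop :=
  ∃ f : ZMod (Fintype.card V) ≃ V, ∀ i, R (f i) (f (i + 1))

/-- `f` enumerates an undirected Hamiltonian cycle of `G`. -/
def IsHamCycleFn {V : Type*} [Fintype V] (G : SimpleGraph V)
    (f : ZMod (Fintype.card V) ≃ V) : Prop :=
  ∀ i, G.Adj (f i) (f (i + 1))

/-- The undirected graph `G` has a Hamiltonian cycle. -/
def Hamiltonian {V : Type*} [Fintype V] (G : SimpleGraph V) : Prop :=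
  ∃ f : ZMod (Fintype.card V) ≃ V, IsHamCycleFn G f

/-- Base (oriented) adjacency of the result of applying the node gadget with node graph `N`
and cross-edges `C` to the directed graph `R`. -/
def nodeApplyBase {V : Type*} {m : ℕ} (N : SimpleGraph (Fin m)) (C : Fin m → Fin m → Prop)
    (R : V → V → Prop) (x y : V × Fin m) : Prop :=
  (x.1 = y.1 ∧ N.Adj x.2 y.2) ∨ (R x.1 y.1 ∧ C x.2 y.2)

/-- Applying a node-gadget reduction (node graph `N`, cross-edges `C`) to a directed graph
`R`: each vertex is replaced by a copy of `N`, and each directed edge `(u,v)` induces the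
undirected edges `{i_u, j_v}` for every cross-edge `(i,j) ∈ C`. -/
def nodeApply {V : Type*} {m : ℕ} (N : SimpleGraph (Fin m)) (C : Fin m → Fin m → Prop)
    (R : V → V → Prop) : SimpleGraph (V × Fin m) where
  Adj x y := x ≠ y ∧ (nodeApplyBase N C R x y ∨ nodeApplyBase N C R y x)
  symm := ⟨fun x y h => ⟨h.1.symm, h.2.symm⟩⟩
  loopless := ⟨fun x h => h.1 rfl⟩

/-- The node gadget itself, as a graph on two copies of `Fin m`: two copies of the node
graph `N` plus the cross-edges `C` between the first and the second copy. -/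
def gadgetGraph {m : ℕ} (N : SimpleGraph (Fin m)) (C : Fin m → Fin m → Prop) :
    SimpleGraph (Fin m ⊕ Fin m) where
  Adj x y :=
    (∃ i j, N.Adj i j ∧ ((x = Sum.inl i ∧ y = Sum.inl j) ∨ (x = Sum.inr i ∧ y = Sum.inr j))) ∨
    (∃ i j, C i j ∧ ((x = Sum.inl i ∧ y = Sum.inr j) ∨ (x = Sum.inr j ∧ y = Sum.inl i)))
  symm := by
    constructor
    rintro x y (⟨i, j, h, ⟨rfl, rfl⟩ | ⟨rfl, rfl⟩⟩ | ⟨i, j, h, ⟨rfl, rfl⟩ | ⟨rfl, rfl⟩⟩)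
    · exact Or.inl ⟨j, i, h.symm, Or.inl ⟨rfl, rfl⟩⟩
    · exact Or.inl ⟨j, i, h.symm, Or.inr ⟨rfl, rfl⟩⟩
    · exact Or.inr ⟨i, j, h, Or.inr ⟨rfl, rfl⟩⟩
    · exact Or.inr ⟨i, j, h, Or.inl ⟨rfl, rfl⟩⟩
  loopless := by
    constructor
    rintro x (⟨i, j, h, ⟨h1, h2⟩ | ⟨h1, h2⟩⟩ | ⟨i, j, h, ⟨h1, h2⟩ | ⟨h1, h2⟩⟩) <;>
      subst h1 <;> simp_all

/-- The standard node gadget for reducing directed to undirected Hamiltonian cycle: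
the node graph is the path `in — mid — out` (`pathGraph 3`) and the only cross-edge goes
from `out` (index 2) to `in` (index 0). -/
def stdHCGadget {V : Type*} (R : V → V → Prop) : SimpleGraph (V × Fin 3) :=
  nodeApply (pathGraph 3) (fun i j => i = 2 ∧ j = 0) R

section stmt19aux

variable {V : Type*} {R : V → V → Prop}

private lemma gadget_adj {x y : V × Fin 3} (h : (stdHCGadget R).Adj x y) :
    (x.1 = y.1 ∧ (pathGraph 3).Adj x.2 y.2) ∨ (R x.1 y.1 ∧ x.2 = 2 ∧ y.2 = 0)
      ∨ (R y.1 x.1 ∧ y.2 = 2 ∧ x.2 = 0) := by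
  obtain ⟨hne, h | h⟩ := h <;> rcases h with ⟨a, b⟩ | ⟨a, b⟩
  · exact Or.inl ⟨a, b⟩
  · exact Or.inr (Or.inl ⟨a, b⟩)
  · exact Or.inl ⟨a.symm, b.symm⟩
  · exact Or.inr (Or.inr ⟨a, b⟩)

private lemma adj_mid {v : V} {x : V × Fin 3} (h : (stdHCGadget R).Adj (v, 1) x) :
    x = (v, 0) ∨ x = (v, 2) := by
  obtain ⟨w, b⟩ := x
  rcases gadget_adj h with ⟨h1, h2⟩ | ⟨h1, h2, h3⟩ | ⟨h1, h2, h3⟩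
  · dsimp at h1 h2; subst h1
    rw [pathGraph_adj] at h2
    fin_cases b <;> simp_all
  · simp at h2
  · simp at h3

private lemma adj_out {v : V} {x : V × Fin 3} (h : (stdHCGadget R).Adj (v, 2) x) :
    x = (v, 1) ∨ ∃ w, R v w ∧ x = (w, 0) := by
  obtain ⟨w, b⟩ := x
  rcases gadget_adj h with ⟨h1, h2⟩ | ⟨h1, h2, h3⟩ | ⟨h1, h2, h3⟩
  · dsimp at h1 h2; subst h1
    rw [pathGraph_adj] at h2
    left; fin_cases b <;> simp_all
  · dsimp at h1 h3; subst h3; exact Or.inr ⟨w, h1, rfl⟩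
  · simp at h3

private lemma two_ne_zero'' {n : ℕ} (h : 3 ≤ n) : (2 : ZMod n) ≠ 0 := by
  have e : ((2:ℕ) : ZMod n) = 2 := by push_cast; ring
  rw [← e]
  intro hc
  rw [show (0:ZMod n) = ((0:ℕ):ZMod n) by push_cast; ring, ZMod.natCast_eq_natCast_iff] at hc
  have h1 := (Nat.modEq_zero_iff_dvd).1 hc
  have := Nat.le_of_dvd (by norm_num) h1
  omega

section
variable [Fintype V]
  (hn : 3 ≤ Fintype.card (V × Fin 3))
  (f : ZMod (Fintype.card (V × Fin 3)) ≃ V × Fin 3)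
  (hf : IsHamCycleFn (stdHCGadget R) f)

include hn hf

private lemma edges_mid (v : V) :
    ∃ i, f i = (v, 1) ∧ ((f (i+1) = (v,0) ∧ f (i-1) = (v,2)) ∨
      (f (i+1) = (v,2) ∧ f (i-1) = (v,0))) := by
  refine ⟨f.symm (v,1), f.apply_symm_apply _, ?_⟩
  set i := f.symm (v,1) with hi
  have hfi : f i = (v,1) := f.apply_symm_apply _
  have ha := hf i; rw [hfi] at ha
  have h1 := adj_mid ha
  have hb := hf (i-1); rw [show i - 1 + 1 = i from by ring, hfi] at hb
  have h2 := adj_mid hb.symm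
  have hne : f (i+1) ≠ f (i-1) := by
    intro hc
    exact two_ne_zero'' hn (by linear_combination f.injective hc)
  rcases h1 with h1 | h1 <;> rcases h2 with h2 | h2
  · exact absurd (h1.trans h2.symm) hne
  · exact Or.inl ⟨h1, h2⟩
  · exact Or.inr ⟨h1, h2⟩
  · exact absurd (h1.trans h2.symm) hne

private lemma step_lem {i : ZMod (Fintype.card (V × Fin 3))} {v : V}
    (h0 : f i = (v,0)) (h1 : f (i+1) = (v,1)) (h2 : f (i+2) = (v,2)) :
    ∃ w, R v w ∧ f (i+3) = (w,0) ∧ f (i+4) = (w,1) ∧ f (i+5) = (w,2) := by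
  have ha := hf (i+2); rw [h2, show i+2+1 = i+3 from by ring] at ha
  rcases adj_out ha with h3 | ⟨w, hR, h3⟩
  · exact absurd (by linear_combination f.injective (h3.trans h1.symm))
      (two_ne_zero'' hn)
  have h4 : f (i+4) = (w,1) := by
    obtain ⟨j, hj, hcase⟩ := edges_mid hn f hf w
    rcases hcase with ⟨hj1, hj2⟩ | ⟨hj1, hj2⟩
    · have e : j = i + 2 := by linear_combination f.injective (hj1.trans h3.symm)
      rw [e, h2] at hj
      exact absurd (congrArg Prod.snd hj) (by simp)
    · have e : j = i + 4 := by linear_combination f.injective (hj2.trans h3.symm)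
      rw [← e]; exact hj
  have hb := hf (i+4); rw [h4, show i+4+1 = i+5 from by ring] at hb
  rcases adj_mid hb with h5 | h5
  · exact absurd (by linear_combination f.injective (h5.trans h3.symm))
      (two_ne_zero'' hn)
  · exact ⟨w, hR, h3, h4, h5⟩

private lemma part3_lem (hcard : Fintype.card (V × Fin 3) = 3 * Fintype.card V)
    {i0 : ZMod (Fintype.card (V × Fin 3))} {v0 : V}
    (h0 : f i0 = (v0, 0)) (h1 : f (i0 + 1) = (v0, 1)) (h2 : f (i0 + 2) = (v0, 2)) :
    DirHamiltonian R := by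
  have hcV : 1 ≤ Fintype.card V := by omega
  haveI : NeZero (Fintype.card V) := ⟨by omega⟩
  have chain : ∀ k : ℕ, f (i0 + (3*k:ℕ)) = ((f (i0 + (3*k:ℕ))).1, 0)
      ∧ f (i0 + (3*k:ℕ) + 1) = ((f (i0 + (3*k:ℕ))).1, 1)
      ∧ f (i0 + (3*k:ℕ) + 2) = ((f (i0 + (3*k:ℕ))).1, 2) := by
    intro k
    induction k with
    | zero =>
      have e : i0 + ((3*0:ℕ) : ZMod (Fintype.card (V × Fin 3))) = i0 := by push_cast; ring
      rw [e, h0]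
      exact ⟨rfl, h1, h2⟩
    | succ k ih =>
      obtain ⟨w, hR, g0, g1, g2⟩ := step_lem hn f hf ih.1 ih.2.1 ih.2.2
      have e3 : i0 + ((3*(k+1):ℕ) : ZMod (Fintype.card (V × Fin 3)))
          = i0 + (3*k:ℕ) + 3 := by push_cast; ring
      rw [e3, show i0 + (3*k:ℕ) + 3 + 1 = i0 + (3*k:ℕ) + 4 from by ring,
        show i0 + (3*k:ℕ) + 3 + 2 = i0 + (3*k:ℕ) + 5 from by ring, g0, g1, g2]
      exact ⟨rfl, rfl, rfl⟩
  have Rchain : ∀ k : ℕ, R (f (i0 + (3*k:ℕ))).1 (f (i0 + (3*(k+1):ℕ))).1 := by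
    intro k
    obtain ⟨hA, hB, hC⟩ := chain k
    obtain ⟨w, hR, g0, _, _⟩ := step_lem hn f hf hA hB hC
    have e3 : i0 + ((3*(k+1):ℕ) : ZMod (Fintype.card (V × Fin 3)))
        = i0 + (3*k:ℕ) + 3 := by push_cast; ring
    rw [e3, g0]; exact hR
  have coh : ∀ a b : ℕ, a % Fintype.card V = b % Fintype.card V →
      ((3*a : ℕ) : ZMod (Fintype.card (V × Fin 3))) = ((3*b : ℕ) : _) := by
    intro a b hab
    rw [ZMod.natCast_eq_natCast_iff]
    show 3*a % _ = 3*b % _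
    rw [hcard, Nat.mul_mod_mul_left, Nat.mul_mod_mul_left, hab]
  set g : ZMod (Fintype.card V) → V :=
    fun k => (f (i0 + ((3 * k.val : ℕ) : ZMod (Fintype.card (V × Fin 3))))).1 with hg
  have hginj : Function.Injective g := by
    intro a b hab
    simp only [hg] at hab
    have hfe : f (i0 + ((3*a.val:ℕ) : ZMod (Fintype.card (V × Fin 3))))
        = f (i0 + ((3*b.val:ℕ) : ZMod (Fintype.card (V × Fin 3)))) := by
      rw [(chain a.val).1, (chain b.val).1]
      exact congrArg (fun t => (t, (0:Fin 3))) hab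
    have e1 := add_left_cancel (f.injective hfe)
    rw [ZMod.natCast_eq_natCast_iff, hcard] at e1
    have e2 : (3 * a.val) % (3 * Fintype.card V) = (3 * b.val) % (3 * Fintype.card V) := e1
    rw [Nat.mul_mod_mul_left, Nat.mul_mod_mul_left] at e2
    have e3 := Nat.eq_of_mul_eq_mul_left (by norm_num) e2
    rw [Nat.mod_eq_of_lt (ZMod.val_lt a), Nat.mod_eq_of_lt (ZMod.val_lt b)] at e3
    exact ZMod.val_injective _ e3
  have hbij : Function.Bijective g :=
    (Fintype.bijective_iff_injective_and_card g).2 ⟨hginj, by simp [ZMod.card]⟩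
  refine ⟨Equiv.ofBijective g hbij, ?_⟩
  intro k
  show R (g k) (g (k+1))
  have hmod : (k+1).val % Fintype.card V = (k.val + 1) % Fintype.card V := by
    have e : ((k+1).val : ZMod (Fintype.card V)) = ((k.val + 1 : ℕ) : ZMod (Fintype.card V)) := by
      push_cast [ZMod.natCast_val, ZMod.cast_id]
      ring
    exact (ZMod.natCast_eq_natCast_iff _ _ _).1 e
  have e := coh _ _ hmod
  simp only [hg]
  rw [e]
  exact Rchain k.val

end

end stmt19aux

theorem stmt_19 {V : Type*} [Fintype V] (R : V → V → Prop) (hloopless : ∀ v, ¬ R v v)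
    (f : ZMod (Fintype.card (V × Fin 3)) ≃ V × Fin 3)
    (hf : IsHamCycleFn (stdHCGadget R) f) :
    (∀ v : V, (∃ i, (f i = (v, 0) ∧ f (i + 1) = (v, 1)) ∨ (f i = (v, 1) ∧ f (i + 1) = (v, 0))) ∧
      (∃ i, (f i = (v, 1) ∧ f (i + 1) = (v, 2)) ∨ (f i = (v, 2) ∧ f (i + 1) = (v, 1)))) ∧
    (∀ v : V, ∃ i,
      (f i = (v, 0) ∧ f (i + 1) = (v, 1) ∧ f (i + 2) = (v, 2)) ∨
      (f i = (v, 2) ∧ f (i + 1) = (v, 1) ∧ f (i + 2) = (v, 0))) ∧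
    DirHamiltonian R := by
  have hcard : Fintype.card (V × Fin 3) = 3 * Fintype.card V := by
    simp [Fintype.card_prod, mul_comm]
  have hcV : 1 ≤ Fintype.card V := by
    haveI : Nonempty V := ⟨(f 0).1⟩
    exact Fintype.card_pos
  have hn : 3 ≤ Fintype.card (V × Fin 3) := by omega
  have part2 : ∀ v : V, ∃ i,
      (f i = (v, 0) ∧ f (i + 1) = (v, 1) ∧ f (i + 2) = (v, 2)) ∨
      (f i = (v, 2) ∧ f (i + 1) = (v, 1) ∧ f (i + 2) = (v, 0)) := by
    intro v
    obtain ⟨i, hi, hc⟩ := edges_mid hn f hf v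
    rcases hc with ⟨hA, hB⟩ | ⟨hA, hB⟩
    · exact ⟨i-1, Or.inr ⟨hB, by rw [show i-1+1 = i from by ring]; exact hi,
        by rw [show i-1+2 = i+1 from by ring]; exact hA⟩⟩
    · exact ⟨i-1, Or.inl ⟨hB, by rw [show i-1+1 = i from by ring]; exact hi,
        by rw [show i-1+2 = i+1 from by ring]; exact hA⟩⟩
  refine ⟨?_, part2, ?_⟩
  · intro v
    obtain ⟨i, h⟩ := part2 v
    rcases h with ⟨hA, hB, hC⟩ | ⟨hA, hB, hC⟩
    · exact ⟨⟨i, Or.inl ⟨hA, hB⟩⟩,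
        ⟨i+1, Or.inl ⟨hB, by rw [show i+1+1 = i+2 from by ring]; exact hC⟩⟩⟩
    · exact ⟨⟨i+1, Or.inr ⟨hB, by rw [show i+1+1 = i+2 from by ring]; exact hC⟩⟩,
        ⟨i, Or.inr ⟨hA, hB⟩⟩⟩
  · obtain ⟨i, h⟩ := part2 ((f 0).1)
    rcases h with ⟨hA, hB, hC⟩ | ⟨hA, hB, hC⟩
    · exact part3_lem hn f hf hcard hA hB hC
    · set f' := (Equiv.subLeft (i+2)).trans f with hf'def
      have hf' : IsHamCycleFn (stdHCGadget R) f' := by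
        intro j
        have h := (hf (i + 1 - j)).symm
        simp only [hf'def, Equiv.trans_apply, Equiv.subLeft_apply]
        rw [show i+2-j = i+1-j+1 from by ring, show i+2-(j+1) = i+1-j from by ring]
        exact h
      refine part3_lem hn f' hf' hcard (i0 := 0) (v0 := (f 0).1) ?_ ?_ ?_
      · show f (i+2-0) = _
        rw [show i+2-0 = i+2 from by ring]; exact hC
      · show f (i+2-(0+1)) = _
        rw [show i+2-(0+1) = i+1 from by ring]; exact hB
      · show f (i+2-(0+2)) = _
        rw [show i+2-(0+2) = i from by ring]; exact hA
end
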